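/- Let a ∈ ℤ and b ∈ ℕ with b ≥ 1 be relatively prime. Then for all real x > 0, |B_{x,0}(a/b)| ≤ b/x, where B_{x,0}(t) = (1/x)·Σ_{1 ≤ k ≤ ⌊x⌋} β₀(kt) and β₀(t) = t - ⌊t⌋ - 1/2 for t ∉ ℤ, β₀(t) = 0 for t ∈ ℤ. -/

import Mathlib

noncomputable def beta0 (t : ℝ) : ℝ := if Int.fract t = 0 then 0 else t - ⌊t⌋ - 1/2

noncomputable def B0 (x : ℝ) (t : ℝ) : ℝ :=
  (1/x) * ∑ k ∈ Finset.Icc 1 ⌊x⌋₊, beta0 (k * t)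

lemma beta0_eq (t : ℝ) : beta0 t = if Int.fract t = 0 then 0 else Int.fract t - 1/2 := rfl

lemma abs_beta0_le (t : ℝ) : |beta0 t| ≤ 1/2 := by
  rw [beta0_eq]
  split
  · norm_num
  · rw [abs_le]
    constructor
    · linarith [Int.fract_nonneg t]
    · linarith [Int.fract_lt_one t]

lemma beta0_add_int (t : ℝ) (m : ℤ) : beta0 (t + m) = beta0 t := by
  rw [beta0_eq, beta0_eq, Int.fract_add_intCast]

lemma sum_id_aux : ∀ c : ℕ, (∑ k ∈ Finset.range c, ((k : ℝ) + 1)) = c * (c + 1) / 2 := by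
  intro c
  induction c with
  | zero => simp
  | succ n ih => rw [Finset.sum_range_succ, ih]; push_cast; ring

lemma beta0_sum_frac (b : ℕ) (hb : 1 ≤ b) :
    (∑ k ∈ Finset.range b, beta0 ((k : ℝ) / b)) = 0 := by
  have hb' : (0 : ℝ) < b := by exact_mod_cast hb
  have hcong : ∀ k ∈ Finset.range b, beta0 ((k : ℝ) / b)
      = if k = 0 then 0 else (k : ℝ) / b - 1/2 := by
    intro k hk
    rw [Finset.mem_range] at hk
    have h0 : (0:ℝ) ≤ (k : ℝ) / b := by positivity
    have h1 : (k : ℝ) / b < 1 := by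
      rw [div_lt_one hb']; exact_mod_cast hk
    rw [beta0_eq, Int.fract_eq_self.mpr ⟨h0, h1⟩]
    by_cases hk0 : k = 0
    · simp [hk0]
    · have : (k:ℝ)/b ≠ 0 := by positivity
      simp [hk0, this]
  rw [Finset.sum_congr rfl hcong]
  obtain ⟨c, rfl⟩ : ∃ c, b = c + 1 := ⟨b - 1, by omega⟩
  rw [Finset.sum_range_succ']
  simp only [Nat.succ_ne_zero, if_false, if_true]
  have key : (∑ k ∈ Finset.range c, (((k+1 : ℕ) : ℝ) / ((c:ℕ)+1:ℕ) - 1/2))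
      = (∑ k ∈ Finset.range c, ((k:ℝ)+1)) / ((c:ℝ)+1) - c/2 := by
    rw [Finset.sum_sub_distrib, Finset.sum_div]
    push_cast
    rw [Finset.sum_const, Finset.card_range, nsmul_eq_mul]
    congr 1
    ring
  rw [key, sum_id_aux]
  have hc : ((c:ℝ)+1) ≠ 0 := by positivity
  field_simp
  ring

lemma beta0_block (a : ℤ) (b : ℕ) (hb : 1 ≤ b) (hab : Int.gcd a b = 1) :
    (∑ k ∈ Finset.range b, beta0 ((k : ℝ) * ((a : ℝ) / b))) = 0 := by
  haveI : NeZero b := ⟨by omega⟩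
  have hb' : (b : ℝ) ≠ 0 := by positivity
  set g : ZMod b → ℝ := fun z => beta0 ((z.val : ℝ) / b) with hg
  have hstep : ∀ k : ℕ, beta0 ((k : ℝ) * ((a : ℝ) / b)) = g (((k : ZMod b) * (a : ZMod b))) := by
    intro k
    have hval : ((((k : ZMod b) * (a : ZMod b)).val : ℤ)) = ((k:ℤ) * a) % b := by
      have h : ((k : ZMod b) * (a : ZMod b)) = (((k : ℤ) * a : ℤ) : ZMod b) := by push_cast; ring
      rw [h, ZMod.val_intCast]
    have hvalR : ((((k : ZMod b) * (a : ZMod b)).val : ℝ))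
        = (k:ℝ) * a - (b:ℝ) * ((((k:ℤ)*a)/(b:ℤ) : ℤ) : ℝ) := by
      have h2 : ((((k : ZMod b) * (a : ZMod b)).val : ℤ))
          = (k:ℤ)*a - (b:ℤ) * (((k:ℤ)*a)/(b:ℤ)) := by rw [hval, Int.emod_def]
      have := congrArg (fun z : ℤ => (z : ℝ)) h2
      push_cast at this
      exact this
    have key : (k : ℝ) * ((a : ℝ) / b)
        = ((((k : ZMod b) * (a : ZMod b)).val : ℝ) / b) + ((((k:ℤ)*a)/(b:ℤ) : ℤ) : ℝ) := by
      rw [hvalR]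
      field_simp
      ring
    rw [key]
    have : ((((k:ℤ)*a)/(b:ℤ) : ℤ) : ℝ) = (((((k:ℤ)*a)/(b:ℤ) : ℤ)) : ℝ) := rfl
    exact beta0_add_int _ _
  rw [Finset.sum_congr rfl (fun k _ => hstep k)]
  have h2 : (∑ k ∈ Finset.range b, g ((k : ZMod b) * (a : ZMod b)))
      = ∑ z : ZMod b, g (z * (a : ZMod b)) := by
    refine Finset.sum_nbij' (f := fun k : ℕ => g ((k : ZMod b) * (a : ZMod b)))
      (g := fun z : ZMod b => g (z * (a : ZMod b)))
      (fun k => (k : ZMod b)) (fun z : ZMod b => z.val) ?_ ?_ ?_ ?_ ?_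
    · intro k hk; exact Finset.mem_univ _
    · intro z hz; simpa [Finset.mem_range] using ZMod.val_lt z
    · intro k hk
      rw [Finset.mem_range] at hk
      exact ZMod.val_natCast_of_lt hk
    · intro z hz; exact ZMod.natCast_rightInverse z
    · intro k hk; rfl
  rw [h2]
  have hu : IsUnit ((a : ZMod b)) := by
    have hcop : Nat.Coprime a.natAbs b := hab
    have h1 : IsUnit ((a.natAbs : ZMod b)) := (ZMod.isUnit_iff_coprime _ _).mpr hcop
    rcases Int.natAbs_eq a with h | h
    · rw [h, Int.cast_natCast]; exact h1
    · rw [h, Int.cast_neg, Int.cast_natCast]; exact h1.neg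
  have h3 : (∑ z : ZMod b, g (z * (a : ZMod b))) = ∑ z : ZMod b, g z := by
    apply Fintype.sum_bijective (fun z : ZMod b => z * (a : ZMod b))
    · exact hu.unit_spec ▸ Units.mulRight_bijective hu.unit
    · intro z; rfl
  rw [h3]
  have h4 : (∑ z : ZMod b, g z) = ∑ k ∈ Finset.range b, beta0 ((k:ℝ)/b) := by
    refine Finset.sum_nbij' (f := fun z : ZMod b => g z)
      (g := fun k : ℕ => beta0 ((k:ℝ)/b))
      (fun z : ZMod b => z.val) (fun k => (k : ZMod b)) ?_ ?_ ?_ ?_ ?_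
    · intro z hz; simpa [Finset.mem_range] using ZMod.val_lt z
    · intro k hk; exact Finset.mem_univ _
    · intro z hz; exact ZMod.natCast_rightInverse z
    · intro k hk; rw [Finset.mem_range] at hk; exact ZMod.val_natCast_of_lt hk
    · intro z hz; rfl
  rw [h4]
  exact beta0_sum_frac b hb

lemma key_bound (a : ℤ) (b : ℕ) (hb : 1 ≤ b) (hab : Int.gcd a b = 1) :
    ∀ n : ℕ, |∑ k ∈ Finset.range n, beta0 ((k : ℝ) * ((a : ℝ) / b))| ≤ (b : ℝ) / 2 := by
  intro n
  induction n using Nat.strong_induction_on with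
  | _ n ih =>
    rcases lt_or_ge n b with h | h
    · calc |∑ k ∈ Finset.range n, beta0 ((k : ℝ) * ((a : ℝ) / b))|
          ≤ ∑ k ∈ Finset.range n, |beta0 ((k : ℝ) * ((a : ℝ) / b))| :=
            Finset.abs_sum_le_sum_abs _ _
        _ ≤ ∑ k ∈ Finset.range n, (1/2 : ℝ) :=
            Finset.sum_le_sum (fun k _ => abs_beta0_le _)
        _ = n * (1/2) := by rw [Finset.sum_const, Finset.card_range]; ring
        _ ≤ (b:ℝ)/2 := by
            have : (n:ℝ) ≤ b := by exact_mod_cast h.le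
            linarith
    · obtain ⟨m, rfl⟩ : ∃ m, n = b + m := ⟨n - b, by omega⟩
      rw [Finset.sum_range_add]
      rw [beta0_block a b hb hab, zero_add]
      have hper : ∀ k : ℕ, beta0 (((b + k : ℕ) : ℝ) * ((a : ℝ) / b)) =
          beta0 ((k : ℝ) * ((a : ℝ) / b)) := by
        intro k
        have hb' : (b : ℝ) ≠ 0 := by positivity
        have h' : ((b + k : ℕ) : ℝ) * ((a : ℝ) / b) = (k : ℝ) * ((a : ℝ) / b) + (a : ℤ) := by
          push_cast; field_simp; ring
        rw [h', beta0_add_int]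
      rw [Finset.sum_congr rfl (fun k _ => hper k)]
      exact ih m (by omega)

theorem stmt_4 (a : ℤ) (b : ℕ) (hb : 1 ≤ b) (hab : Int.gcd a b = 1)
    (x : ℝ) (hx : 0 < x) :
    |B0 x ((a : ℝ) / b)| ≤ b / x := by
  set n := ⌊x⌋₊
  have hsplit : (∑ k ∈ Finset.range (n+1), beta0 ((k : ℝ) * ((a : ℝ) / b)))
      = beta0 0 + ∑ k ∈ Finset.Icc 1 n, beta0 ((k : ℝ) * ((a : ℝ) / b)) := by
    rw [Finset.range_eq_Ico, ← Finset.sum_Ico_consecutive _ (by omega : 0 ≤ 1) (by omega : 1 ≤ n+1)]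
    rw [Finset.Ico_add_one_right_eq_Icc]
    congr 1
    simp
  have h0 : beta0 0 = 0 := by rw [beta0_eq]; simp
  have hS : |∑ k ∈ Finset.Icc 1 n, beta0 ((k : ℝ) * ((a : ℝ) / b))| ≤ (b:ℝ) := by
    have := key_bound a b hb hab (n+1)
    rw [hsplit, h0, zero_add] at this
    have hb' : (0:ℝ) < b := by exact_mod_cast hb
    linarith
  have hB : |B0 x ((a : ℝ) / b)|
      = |∑ k ∈ Finset.Icc 1 n, beta0 ((k : ℝ) * ((a : ℝ) / b))| / x := by
    rw [B0, abs_mul, abs_of_pos (by positivity : (0:ℝ) < 1/x)]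
    ring
  rw [hB]
  gcongr
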